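/- The clause gadget sub-board has the property that the maximum number of queens that may be legitimately placed within it is five, and five queens are achievable if and only if one queen is placed in each of the three exterior double squares and not all three of the squares labelled F contain queens. In particular, when the truth assignment simulated by the three exterior double squares places queens in all three F-squares (the 'three falses' assignment), at most four queens can be legitimately placed. -/

import Mathlib

open Computability

/-! ### Boards and pieces -/

/-- A rectangular `rows × cols` board.  Square `(i, j)` (for `i < rows`, `j < cols`) is white
iff `white i j = true`; otherwise it is black.  Black squares are walls through which a
piece cannot move. -/
structure ChessBoard where
  rows : ℕ
  cols : ℕ
  white : ℕ → ℕ → Bool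

/-- The square `p` (with integer coordinates) is a white square of the board `B`. -/
def ChessBoard.White (B : ChessBoard) (p : ℤ × ℤ) : Prop :=
  ∃ i j : ℕ, i < B.rows ∧ j < B.cols ∧ p = ((i : ℤ), (j : ℤ)) ∧ B.white i j = true

/-- The eight directions in which a queen (or king) may move. -/
def queenDirs : List (ℤ × ℤ) :=
  [(1, 0), (-1, 0), (0, 1), (0, -1), (1, 1), (1, -1), (-1, 1), (-1, -1)]

/-- A queen on square `p` of board `B` threatens square `q`:  `q` is reached from `p` by
moving some positive number `t` of steps in one of the eight directions, every strictly
intermediate square being a white square of the board (black squares block the move). -/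
def QueenAttacks (B : ChessBoard) (p q : ℤ × ℤ) : Prop :=
  ∃ d ∈ queenDirs, ∃ t : ℕ, 0 < t ∧
    q = (p.1 + (t : ℤ) * d.1, p.2 + (t : ℤ) * d.2) ∧
    ∀ s : ℕ, 0 < s → s < t → B.White (p.1 + (s : ℤ) * d.1, p.2 + (s : ℤ) * d.2)

/-- A queen restricted to move at most two squares:  as `QueenAttacks`, but with `t ≤ 2`. -/
def Queen2Attacks (B : ChessBoard) (p q : ℤ × ℤ) : Prop :=
  ∃ d ∈ queenDirs, ∃ t : ℕ, 0 < t ∧ t ≤ 2 ∧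
    q = (p.1 + (t : ℤ) * d.1, p.2 + (t : ℤ) * d.2) ∧
    ∀ s : ℕ, 0 < s → s < t → B.White (p.1 + (s : ℤ) * d.1, p.2 + (s : ℤ) * d.2)

/-- A king on square `p` threatens square `q`:  `q` is a different square at Chebyshev
distance one from `p` (one step in any of the eight directions). -/
def KingAttacks (p q : ℤ × ℤ) : Prop :=
  p ≠ q ∧ (p.1 - q.1).natAbs ≤ 1 ∧ (p.2 - q.2).natAbs ≤ 1

/-- A legitimate assignment of queens:  all queens on white squares, no queen in a
position to take any other. -/
def LegitimateQueens (B : ChessBoard) (Q : Finset (ℤ × ℤ)) : Prop :=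
  (∀ p ∈ Q, B.White p) ∧ ∀ p ∈ Q, ∀ q ∈ Q, p ≠ q → ¬ QueenAttacks B p q

/-- A legitimate assignment of queens that move at most two squares. -/
def LegitimateQueens2 (B : ChessBoard) (Q : Finset (ℤ × ℤ)) : Prop :=
  (∀ p ∈ Q, B.White p) ∧ ∀ p ∈ Q, ∀ q ∈ Q, p ≠ q → ¬ Queen2Attacks B p q

/-- A legitimate assignment of kings:  all kings on white squares, no king in a position
to take any other. -/
def LegitimateKings (B : ChessBoard) (Q : Finset (ℤ × ℤ)) : Prop :=
  (∀ p ∈ Q, B.White p) ∧ ∀ p ∈ Q, ∀ q ∈ Q, p ≠ q → ¬ KingAttacks p q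

/-- `m` queens can be legitimately placed on the board `B`. -/
def QueensYes (B : ChessBoard) (m : ℕ) : Prop :=
  ∃ Q : Finset (ℤ × ℤ), Q.card = m ∧ LegitimateQueens B Q

/-- `m` two-square-restricted queens can be legitimately placed on the board `B`. -/
def Queens2Yes (B : ChessBoard) (m : ℕ) : Prop :=
  ∃ Q : Finset (ℤ × ℤ), Q.card = m ∧ LegitimateQueens2 B Q

/-- `m` kings can be legitimately placed on the board `B`. -/
def KingsYes (B : ChessBoard) (m : ℕ) : Prop :=
  ∃ Q : Finset (ℤ × ℤ), Q.card = m ∧ LegitimateKings B Q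

/-- The maximum number of queens that can be legitimately placed on `B` is exactly `m`. -/
def MaxQueensIs (B : ChessBoard) (m : ℕ) : Prop :=
  QueensYes B m ∧ ∀ Q : Finset (ℤ × ℤ), LegitimateQueens B Q → Q.card ≤ m

/-- The maximum number of kings that can be legitimately placed on `B` is exactly `m`. -/
def MaxKingsIs (B : ChessBoard) (m : ℕ) : Prop :=
  KingsYes B m ∧ ∀ Q : Finset (ℤ × ℤ), LegitimateKings B Q → Q.card ≤ m

/-- `p` lies in the `16 × 16` square region whose lower corner is `(a, b)`. -/
def InRect16 (a b : ℤ) (p : ℤ × ℤ) : Prop :=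
  a ≤ p.1 ∧ p.1 < a + 16 ∧ b ≤ p.2 ∧ p.2 < b + 16

/-! ### Encodings of instances as bit-strings -/

/-- Encode a list of natural numbers as a bit-string, each number in unary followed by a
`false` separator. -/
def encodeNatList (L : List ℕ) : List Bool :=
  L.flatMap fun n => List.replicate n true ++ [false]

/-- A concrete binary encoding of a board:  the two dimensions in unary, followed by the
colours of the squares row by row. -/
def encodeBoard (B : ChessBoard) : List Bool :=
  List.replicate B.rows true ++ [false] ++ List.replicate B.cols true ++ [false] ++
    ((List.range B.rows).flatMap fun i => (List.range B.cols).map fun j => B.white i j)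

/-- A concrete binary encoding of an instance (board, tariff) of the queens/kings problems. -/
def encodeInstance (B : ChessBoard) (m : ℕ) : List Bool :=
  encodeBoard B ++ [false] ++ List.replicate m true

/-- The language QUEENS:  encodings of pairs (board, tariff `m`) such that `m` queens can
be legitimately placed on the board. -/
def QUEENS : Set (List Bool) :=
  { w | ∃ (B : ChessBoard) (m : ℕ), w = encodeInstance B m ∧ QueensYes B m }

/-- The language QUEENS₂ (queens restricted to move at most two squares). -/
def QUEENS2 : Set (List Bool) :=
  { w | ∃ (B : ChessBoard) (m : ℕ), w = encodeInstance B m ∧ Queens2Yes B m }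

/-- The language KINGS. -/
def KINGS : Set (List Bool) :=
  { w | ∃ (B : ChessBoard) (m : ℕ), w = encodeInstance B m ∧ KingsYes B m }

/-! ### Polynomial time, NP, NP-completeness -/

/-- The trivial finite encoding of bit-strings over the alphabet `Bool`. -/
def listBoolEncoding : Encoding (List Bool) Bool :=
  ⟨id, Option.some, fun _ => rfl⟩

/-- `f` is computable in polynomial time (by a Turing machine). -/
def PolyTimeFun (f : List Bool → List Bool) : Prop :=
  Nonempty (Turing.TM2ComputableInPolyTime listBoolEncoding.encode listBoolEncoding.encode f)

/-- The boolean predicate `D` is decidable in polynomial time. -/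
def PolyTimePred (D : List Bool → Bool) : Prop :=
  PolyTimeFun fun w => [D w]

/-- Polynomial-time many-one reducibility between languages. -/
def ReducesTo (A B : Set (List Bool)) : Prop :=
  ∃ f : List Bool → List Bool, PolyTimeFun f ∧ ∀ w : List Bool, w ∈ A ↔ f w ∈ B

/-- An unambiguous pairing of two bit-strings into one. -/
def pairCode (x y : List Bool) : List Bool :=
  (x.flatMap fun b => [b, b]) ++ [true, false] ++ y

/-- Membership in NP:  there are a polynomial `p` and a polynomial-time verifier `V` such
that `x ∈ A` iff some certificate `c` of length at most `p (|x|)` makes `V` accept. -/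
def InNP (A : Set (List Bool)) : Prop :=
  ∃ (p : Polynomial ℕ) (V : List Bool → Bool), PolyTimePred V ∧
    ∀ x : List Bool, x ∈ A ↔
      ∃ c : List Bool, c.length ≤ p.eval x.length ∧ V (pairCode x c) = true

/-- NP-hardness with respect to polynomial-time many-one reductions. -/
def NPHard (A : Set (List Bool)) : Prop :=
  ∀ B : Set (List Bool), InNP B → ReducesTo B A

/-- NP-completeness with respect to polynomial-time many-one reductions. -/
def NPComplete (A : Set (List Bool)) : Prop :=
  InNP A ∧ NPHard A

/-! ### Planar 3-SAT -/

/-- A CNF formula:  variables are `0, …, numVars - 1`; a literal is a pair (variable,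
polarity); a clause is a list of literals. -/
structure CNF where
  numVars : ℕ
  clauses : List (List (ℕ × Bool))

/-- Satisfiability of a CNF formula. -/
def CNF.Satisfiable (φ : CNF) : Prop :=
  ∃ v : ℕ → Bool, ∀ C ∈ φ.clauses, ∃ l ∈ C, v l.1 = l.2

/-- The incidence graph of a CNF formula:  vertices are the variables (`Sum.inl`) and the
clauses (`Sum.inr`, by index), with an edge joining a variable to each clause in which it
features. -/
def CNF.incidenceGraph (φ : CNF) : SimpleGraph (ℕ ⊕ ℕ) :=
  SimpleGraph.fromRel fun a b =>
    match a, b with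
    | Sum.inl v, Sum.inr c => c < φ.clauses.length ∧ ∃ l ∈ φ.clauses.getD c [], l.1 = v
    | _, _ => False

/-- `H` is a minor of `G`:  there are nonempty, pairwise disjoint, connected branch sets
in `G`, one for each vertex of `H`, with an edge of `G` between the branch sets of any
two adjacent vertices of `H`. -/
def SimpleGraph.IsMinorOf {W V : Type*} (H : SimpleGraph W) (G : SimpleGraph V) : Prop :=
  ∃ f : W → Set V, (∀ w, (f w).Nonempty) ∧ (∀ w, (G.induce (f w)).Connected) ∧
    (∀ w w' : W, w ≠ w' → Disjoint (f w) (f w')) ∧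
    ∀ w w' : W, H.Adj w w' → ∃ a ∈ f w, ∃ b ∈ f w', G.Adj a b

/-- Planarity of a graph, via Wagner's characterisation:  neither `K₅` nor `K₃,₃` is a
minor. -/
def SimpleGraph.Planar {V : Type*} (G : SimpleGraph V) : Prop :=
  ¬ (completeGraph (Fin 5)).IsMinorOf G ∧
    ¬ (completeBipartiteGraph (Fin 3) (Fin 3)).IsMinorOf G

/-- A planar 3-SAT instance:  every clause has at most 3 literals, every literal mentions
a genuine variable, and the incidence graph is planar. -/
def CNF.Planar3 (φ : CNF) : Prop :=
  (∀ C ∈ φ.clauses, C.length ≤ 3) ∧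
    (∀ C ∈ φ.clauses, ∀ l ∈ C, l.1 < φ.numVars) ∧
    φ.incidenceGraph.Planar

/-- Flatten a CNF formula into a list of natural numbers. -/
def CNF.flatten (φ : CNF) : List ℕ :=
  φ.numVars :: φ.clauses.length ::
    φ.clauses.flatMap fun C => C.length :: C.map fun l => 2 * l.1 + (if l.2 then 1 else 0)

/-- A concrete binary encoding of CNF formulas. -/
def encodeCNF (φ : CNF) : List Bool :=
  encodeNatList φ.flatten

/-- The language PLANAR-3-SAT:  encodings of satisfiable planar 3-SAT instances. -/
def PLANARSAT3 : Set (List Bool) :=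
  { w | ∃ φ : CNF, w = encodeCNF φ ∧ φ.Planar3 ∧ φ.Satisfiable }


/-! ### Auxiliary development for the clause gadget -/

/-- White squares of the gadget board. -/
def WLcg : List (ℤ × ℤ) :=
  [(0,0),(1,5),(2,2),(2,4),(3,2),(3,4),(3,6),(3,7),(4,3),(4,4),(4,5)]

/-- The gadget board. -/
def Bcg : ChessBoard := ⟨5, 8, fun i j => decide (((i:ℤ),(j:ℤ)) ∈ WLcg)⟩

lemma whitecg_iff (p : ℤ × ℤ) : Bcg.White p ↔ p ∈ WLcg := by
  constructor
  · rintro ⟨i, j, hi, hj, rfl, hw⟩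
    exact of_decide_eq_true hw
  · intro h
    fin_cases h
    · exact ⟨0, 0, by decide, by decide, by norm_num, by decide⟩
    · exact ⟨1, 5, by decide, by decide, by norm_num, by decide⟩
    · exact ⟨2, 2, by decide, by decide, by norm_num, by decide⟩
    · exact ⟨2, 4, by decide, by decide, by norm_num, by decide⟩
    · exact ⟨3, 2, by decide, by decide, by norm_num, by decide⟩
    · exact ⟨3, 4, by decide, by decide, by norm_num, by decide⟩
    · exact ⟨3, 6, by decide, by decide, by norm_num, by decide⟩
    · exact ⟨3, 7, by decide, by decide, by norm_num, by decide⟩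
    · exact ⟨4, 3, by decide, by decide, by norm_num, by decide⟩
    · exact ⟨4, 4, by decide, by decide, by norm_num, by decide⟩
    · exact ⟨4, 5, by decide, by decide, by norm_num, by decide⟩

/-- Bounded, decidable version of the attack relation on the gadget board. -/
def atkcg (p q : ℤ × ℤ) : Prop :=
  ∃ d ∈ queenDirs, ∃ t ∈ Finset.Icc (1:ℕ) 8,
    q = (p.1 + (t : ℤ) * d.1, p.2 + (t : ℤ) * d.2) ∧
    ∀ s ∈ Finset.Ico (1:ℕ) t, (p.1 + (s : ℤ) * d.1, p.2 + (s : ℤ) * d.2) ∈ WLcg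

instance (p q : ℤ × ℤ) : Decidable (atkcg p q) := by unfold atkcg; infer_instance

instance (p q : ℤ × ℤ) : Decidable (KingAttacks p q) := by unfold KingAttacks; infer_instance

lemma mem_WLcg_bounds {p : ℤ × ℤ} (h : p ∈ WLcg) :
    0 ≤ p.1 ∧ p.1 ≤ 4 ∧ 0 ≤ p.2 ∧ p.2 ≤ 7 := by
  fin_cases h <;> norm_num

lemma atkcg_iff {p q : ℤ × ℤ} (hp : p ∈ WLcg) (hq : q ∈ WLcg) :
    QueenAttacks Bcg p q ↔ atkcg p q := by
  constructor
  · rintro ⟨d, hd, t, ht, hq', hblk⟩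
    obtain ⟨hp1, hp2, hp3, hp4⟩ := mem_WLcg_bounds hp
    obtain ⟨hq1, hq2, hq3, hq4⟩ := mem_WLcg_bounds hq
    have ht8 : t ≤ 8 := by
      rw [Prod.ext_iff] at hq'
      fin_cases hd <;> simp at hq' <;> omega
    refine ⟨d, hd, t, Finset.mem_Icc.mpr ⟨ht, ht8⟩, hq', fun s hs => ?_⟩
    rw [Finset.mem_Ico] at hs
    exact (whitecg_iff _).mp (hblk s hs.1 hs.2)
  · rintro ⟨d, hd, t, ht, hq', hblk⟩
    rw [Finset.mem_Icc] at ht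
    exact ⟨d, hd, t, ht.1, hq', fun s hs1 hs2 =>
      (whitecg_iff _).mpr (hblk s (Finset.mem_Ico.mpr ⟨hs1, hs2⟩))⟩

lemma legit_sub_cg {Q : Finset (ℤ × ℤ)} (h : LegitimateQueens Bcg Q) :
    ∀ p ∈ Q, p ∈ WLcg := fun p hp => (whitecg_iff p).mp (h.1 p hp)

lemma legit_of_cg (Q : Finset (ℤ × ℤ)) (hW : ∀ p ∈ Q, p ∈ WLcg)
    (hA : ∀ p ∈ Q, ∀ q ∈ Q, p ≠ q → ¬ atkcg p q) : LegitimateQueens Bcg Q :=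
  ⟨fun p hp => (whitecg_iff p).mpr (hW p hp),
   fun p hp q hq hne hatk => hA p hp q hq hne ((atkcg_iff (hW p hp) (hW q hq)).mp hatk)⟩

/-- The five cliques partitioning the white squares. -/
def Kcg : Fin 5 → Finset (ℤ × ℤ) :=
  ![{(2,2),(3,2)}, {(1,5),(2,4)}, {(3,7),(3,6)}, {(4,3),(4,4),(4,5),(3,4)}, {(0,0)}]

lemma clique_card_cg {Q : Finset (ℤ × ℤ)} (h : LegitimateQueens Bcg Q) (k : Fin 5) :
    (Q ∩ Kcg k).card ≤ 1 := by
  by_contra hc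
  push_neg at hc
  obtain ⟨p, hp, q, hq, hne⟩ := Finset.one_lt_card.mp hc
  rw [Finset.mem_inter] at hp hq
  have hpW : p ∈ WLcg := legit_sub_cg h p hp.1
  have hqW : q ∈ WLcg := legit_sub_cg h q hq.1
  refine h.2 p hp.1 q hq.1 hne ((atkcg_iff hpW hqW).mpr ?_)
  have hatk : ∀ x ∈ Kcg k, ∀ y ∈ Kcg k, x ≠ y → atkcg x y := by
    fin_cases k <;> decide
  exact hatk p hp.2 q hq.2 hne

lemma card_bound_cg {Q : Finset (ℤ × ℤ)} (h : LegitimateQueens Bcg Q) :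
    Q.card ≤ (Q ∩ Kcg 0).card + (Q ∩ Kcg 1).card + (Q ∩ Kcg 2).card +
      (Q ∩ Kcg 3).card + (Q ∩ Kcg 4).card := by
  have hsub : Q ⊆ (Q ∩ Kcg 0) ∪ (Q ∩ Kcg 1) ∪ (Q ∩ Kcg 2) ∪ (Q ∩ Kcg 3) ∪ (Q ∩ Kcg 4) := by
    intro p hp
    have hw := legit_sub_cg h p hp
    simp only [Finset.mem_union, Finset.mem_inter]
    fin_cases hw <;> simp only [hp, true_and, Kcg] <;> decide
  have h1 := Finset.card_le_card hsub
  have h2 := Finset.card_union_le ((Q ∩ Kcg 0) ∪ (Q ∩ Kcg 1) ∪ (Q ∩ Kcg 2) ∪ (Q ∩ Kcg 3)) (Q ∩ Kcg 4)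
  have h3 := Finset.card_union_le ((Q ∩ Kcg 0) ∪ (Q ∩ Kcg 1) ∪ (Q ∩ Kcg 2)) (Q ∩ Kcg 3)
  have h4 := Finset.card_union_le ((Q ∩ Kcg 0) ∪ (Q ∩ Kcg 1)) (Q ∩ Kcg 2)
  have h5 := Finset.card_union_le (Q ∩ Kcg 0) (Q ∩ Kcg 1)
  omega

lemma pair_card_cg {Q : Finset (ℤ × ℤ)} {a b : ℤ × ℤ} (hab : a ≠ b)
    (h : (Q ∩ ({a, b} : Finset (ℤ × ℤ))).card = 1) :
    (a ∈ Q ∧ b ∉ Q) ∨ (b ∈ Q ∧ a ∉ Q) := by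
  by_cases ha : a ∈ Q <;> by_cases hb : b ∈ Q
  · exfalso
    have hsub : ({a, b} : Finset (ℤ × ℤ)) ⊆ Q ∩ {a, b} := by
      intro y hy
      rw [Finset.mem_inter]
      rcases Finset.mem_insert.mp hy with rfl | hy
      · exact ⟨ha, hy⟩
      · rw [Finset.mem_singleton] at hy; subst hy; exact ⟨hb, Finset.mem_insert_of_mem (Finset.mem_singleton_self _)⟩
    have h2 : ({a, b} : Finset (ℤ × ℤ)).card = 2 := Finset.card_pair hab
    have := Finset.card_le_card hsub
    omega
  · exact Or.inl ⟨ha, hb⟩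
  · exact Or.inr ⟨hb, ha⟩
  · exfalso
    have : Q ∩ ({a, b} : Finset (ℤ × ℤ)) = ∅ := by
      ext y
      simp only [Finset.mem_inter, Finset.mem_insert, Finset.mem_singleton, Finset.notMem_empty, iff_false]
      rintro ⟨hyQ, rfl | rfl⟩
      · exact ha hyQ
      · exact hb hyQ
    rw [this] at h
    simp at h
lemma allF_K4_cg {Q : Finset (ℤ × ℤ)} (h : LegitimateQueens Bcg Q)
    (h1 : ((3:ℤ),(2:ℤ)) ∈ Q) (h2 : ((2:ℤ),(4:ℤ)) ∈ Q) (h3 : ((3:ℤ),(6:ℤ)) ∈ Q) :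
    Q ∩ Kcg 3 = ∅ := by
  rw [Finset.eq_empty_iff_forall_notMem]
  intro x hx
  rw [Finset.mem_inter] at hx
  have hxW : x ∈ WLcg := legit_sub_cg h x hx.1
  have hxK : x ∈ (Kcg 3) := hx.2
  fin_cases hxK
  · exact h.2 _ h1 _ hx.1 (by decide) ((atkcg_iff (by decide) (by decide)).mpr (by decide))
  · exact h.2 _ h2 _ hx.1 (by decide) ((atkcg_iff (by decide) (by decide)).mpr (by decide))
  · exact h.2 _ h3 _ hx.1 (by decide) ((atkcg_iff (by decide) (by decide)).mpr (by decide))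
  · exact h.2 _ h2 _ hx.1 (by decide) ((atkcg_iff (by decide) (by decide)).mpr (by decide))

def tScg : Fin 3 → ℤ × ℤ := ![(2,2),(1,5),(3,7)]
def fScg : Fin 3 → ℤ × ℤ := ![(3,2),(2,4),(3,6)]
set_option maxHeartbeats 1000000 in
/-- The clause gadget:  a sub-board with three exterior double squares
(each consisting of a T-square `tSq i` and an F-square `fSq i`, adjacent white squares)
such that the maximum number of queens that may be legitimately placed within it is five,
achievable iff one queen is placed in each of the three exterior double squares and not
all of the three F-squares contain queens; the 'three falses' assignment admits at most
four queens. -/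
theorem clause_gadget :
    ∃ (B : ChessBoard) (tSq fSq : Fin 3 → ℤ × ℤ),
      (∀ i, B.White (tSq i)) ∧ (∀ i, B.White (fSq i)) ∧
      (∀ i, tSq i ≠ fSq i) ∧ (∀ i, KingAttacks (tSq i) (fSq i)) ∧
      (∀ i j, i ≠ j → tSq i ≠ tSq j ∧ fSq i ≠ fSq j ∧ tSq i ≠ fSq j) ∧
      MaxQueensIs B 5 ∧
      -- a maximal (5-queen) placement puts exactly one queen in each exterior double
      -- square, and not all three F-squares contain queens
      (∀ Q : Finset (ℤ × ℤ), LegitimateQueens B Q → Q.card = 5 →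
        (∀ i, (tSq i ∈ Q ∧ fSq i ∉ Q) ∨ (fSq i ∈ Q ∧ tSq i ∉ Q)) ∧ ¬ (∀ i, fSq i ∈ Q)) ∧
      -- conversely, every assignment other than three falses extends to a 5-queen placement
      (∀ a : Fin 3 → Bool, (∃ i, a i = true) →
        ∃ Q : Finset (ℤ × ℤ), LegitimateQueens B Q ∧ Q.card = 5 ∧
          ∀ i, if a i then tSq i ∈ Q ∧ fSq i ∉ Q else fSq i ∈ Q ∧ tSq i ∉ Q) ∧
      -- the 'three falses' assignment admits at most 4 queens
      (∀ Q : Finset (ℤ × ℤ), LegitimateQueens B Q → (∀ i, fSq i ∈ Q) → Q.card ≤ 4) := by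
  refine ⟨Bcg, tScg, fScg, ?_, ?_, by decide, by decide, by decide, ?_, ?_, ?_, ?_⟩
  · intro i; rw [whitecg_iff]; fin_cases i <;> decide
  · intro i; rw [whitecg_iff]; fin_cases i <;> decide
  · -- MaxQueensIs Bcg 5
    constructor
    · exact ⟨{(2,2),(1,5),(3,7),(4,3),(0,0)}, by decide,
        legit_of_cg _ (by decide) (by decide)⟩
    · intro Q hQ
      have hb := card_bound_cg hQ
      have h0 := clique_card_cg hQ 0
      have h1 := clique_card_cg hQ 1
      have h2 := clique_card_cg hQ 2
      have h3 := clique_card_cg hQ 3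
      have h4 := clique_card_cg hQ 4
      omega
  · -- structure of 5-queen placements
    intro Q hQ hc
    have hb := card_bound_cg hQ
    have h0 := clique_card_cg hQ 0
    have h1 := clique_card_cg hQ 1
    have h2 := clique_card_cg hQ 2
    have h3 := clique_card_cg hQ 3
    have h4 := clique_card_cg hQ 4
    have e0 : (Q ∩ Kcg 0).card = 1 := by omega
    have e1 : (Q ∩ Kcg 1).card = 1 := by omega
    have e2 : (Q ∩ Kcg 2).card = 1 := by omega
    have e3 : (Q ∩ Kcg 3).card = 1 := by omega
    constructor
    · intro i
      fin_cases i
      · exact pair_card_cg (by decide) e0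
      · exact pair_card_cg (by decide) e1
      · exact pair_card_cg (by decide) e2
    · intro hF
      have hE := allF_K4_cg hQ (hF 0) (hF 1) (hF 2)
      rw [hE] at e3
      simp at e3
  · -- achievability
    intro a ha
    rcases Bool.dichotomy (a 0) with h0 | h0 <;>
      rcases Bool.dichotomy (a 1) with h1 | h1 <;>
        rcases Bool.dichotomy (a 2) with h2 | h2
    · exfalso; obtain ⟨i, hi⟩ := ha; fin_cases i <;> simp_all
    · refine ⟨{(3,2),(2,4),(3,7),(4,5),(0,0)}, legit_of_cg _ (by decide) (by decide),
        by decide, ?_⟩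
      intro i; fin_cases i <;> simp [h0, h1, h2, tScg, fScg]
    · refine ⟨{(3,2),(1,5),(3,6),(4,4),(0,0)}, legit_of_cg _ (by decide) (by decide),
        by decide, ?_⟩
      intro i; fin_cases i <;> simp [h0, h1, h2, tScg, fScg]
    · refine ⟨{(3,2),(1,5),(3,7),(4,4),(0,0)}, legit_of_cg _ (by decide) (by decide),
        by decide, ?_⟩
      intro i; fin_cases i <;> simp [h0, h1, h2, tScg, fScg]
    · refine ⟨{(2,2),(2,4),(3,6),(4,3),(0,0)}, legit_of_cg _ (by decide) (by decide),
        by decide, ?_⟩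
      intro i; fin_cases i <;> simp [h0, h1, h2, tScg, fScg]
    · refine ⟨{(2,2),(2,4),(3,7),(4,3),(0,0)}, legit_of_cg _ (by decide) (by decide),
        by decide, ?_⟩
      intro i; fin_cases i <;> simp [h0, h1, h2, tScg, fScg]
    · refine ⟨{(2,2),(1,5),(3,6),(4,3),(0,0)}, legit_of_cg _ (by decide) (by decide),
        by decide, ?_⟩
      intro i; fin_cases i <;> simp [h0, h1, h2, tScg, fScg]
    · refine ⟨{(2,2),(1,5),(3,7),(4,3),(0,0)}, legit_of_cg _ (by decide) (by decide),
        by decide, ?_⟩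
      intro i; fin_cases i <;> simp [h0, h1, h2, tScg, fScg]
  · -- three falses: at most 4 queens
    intro Q hQ hF
    have hb := card_bound_cg hQ
    have h0 := clique_card_cg hQ 0
    have h1 := clique_card_cg hQ 1
    have h2 := clique_card_cg hQ 2
    have h4 := clique_card_cg hQ 4
    have hE := allF_K4_cg hQ (hF 0) (hF 1) (hF 2)
    have h3 : (Q ∩ Kcg 3).card = 0 := by rw [hE]; rfl
    omega
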